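/- If 3 ≤ k ≤ n/2, then the Schur square of C_k(S,1,∞) equals {(g(a_1), …, g(a_n), g_{2k}) : g ∈ V_{2k}}, where g_{2k} denotes the coefficient of x^{2k} in g; in particular, for 3 ≤ k < n/2 this set is the code C_{2k}(S,1,∞). -/

import Mathlib

open Polynomial Finset

noncomputable section

/-- Hamming weight of a vector. -/
def wt {F : Type*} [Field F] {N : ℕ} (w : Fin N → F) : ℕ := Set.ncard {i | w i ≠ 0}

/-- The code `C_k(S,v,∞)` as a set of vectors of length `n+1`. -/
def codeSet {F : Type*} [Field F] {n : ℕ} (a v : Fin n → F) (k : ℕ) :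
    Set (Fin (n + 1) → F) :=
  {w | ∃ f : F[X], f.natDegree ≤ k ∧ f.coeff (k - 1) = 0 ∧
    w = Fin.snoc (fun i => v i * f.eval (a i)) (f.coeff k)}

/-- The Euclidean dual of a set of vectors. -/
def dualSet {F : Type*} [Field F] {N : ℕ} (C : Set (Fin N → F)) : Set (Fin N → F) :=
  {y | ∀ x ∈ C, ∑ i, x i * y i = 0}

/-- A (nonzero) code has minimum distance `d`: some nonzero codeword has weight `d`
and every nonzero codeword has weight at least `d`. -/
def IsMinDist {F : Type*} [Field F] {N : ℕ} (C : Set (Fin N → F)) (d : ℕ) : Prop :=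
  (∃ w ∈ C, w ≠ 0 ∧ wt w = d) ∧ ∀ w ∈ C, w ≠ 0 → d ≤ wt w

/-- `u i = ∏_{j ≠ i} (a i - a j)⁻¹`. -/
def uCoeff {F : Type*} [Field F] {n : ℕ} (a : Fin n → F) (i : Fin n) : F :=
  ∏ j ∈ Finset.univ.erase i, (a i - a j)⁻¹

/-- The set of Schur (componentwise) products of elements of two codes. -/
def schurSet {F : Type*} [Field F] {N : ℕ} (C D : Set (Fin N → F)) : Set (Fin N → F) :=
  {w | ∃ c ∈ C, ∃ d ∈ D, w = c * d}

lemma coeff_mul_two_mul {F : Type*} [Field F] {k : ℕ} {f g : F[X]} (hf : f.natDegree ≤ k)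
    (hg : g.natDegree ≤ k) :
    (f * g).coeff (2 * k) = f.coeff k * g.coeff k := by
  rw [coeff_mul]
  refine Finset.sum_eq_single_of_mem (k, k) (by simp [Finset.mem_antidiagonal]; ring) ?_
  rintro ⟨i, j⟩ hij hne
  simp only [Finset.HasAntidiagonal.mem_antidiagonal] at hij
  rcases lt_trichotomy i k with h | h | h
  · have : k < j := by omega
    rw [coeff_eq_zero_of_natDegree_lt (lt_of_le_of_lt hg this), mul_zero]
  · exact absurd (by simp [h]; omega) hne
  · rw [coeff_eq_zero_of_natDegree_lt (lt_of_le_of_lt hf h), zero_mul]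

lemma coeff_mul_pred {F : Type*} [Field F] {k : ℕ} (hk : 1 ≤ k) {f g : F[X]}
    (hf : f.natDegree ≤ k) (hf' : f.coeff (k - 1) = 0) (hg : g.natDegree ≤ k)
    (hg' : g.coeff (k - 1) = 0) :
    (f * g).coeff (2 * k - 1) = 0 := by
  rw [coeff_mul]
  refine Finset.sum_eq_zero ?_
  rintro ⟨i, j⟩ hij
  simp only [Finset.HasAntidiagonal.mem_antidiagonal] at hij
  rcases lt_trichotomy i (k - 1) with h | h | h
  · have : k < j := by omega
    rw [coeff_eq_zero_of_natDegree_lt (lt_of_le_of_lt hg this), mul_zero]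
  · rw [h, hf', zero_mul]
  · rcases lt_or_ge k i with h2 | h2
    · rw [coeff_eq_zero_of_natDegree_lt (lt_of_le_of_lt hf h2), zero_mul]
    · have hik : i = k := by omega
      have hjk : j = k - 1 := by omega
      rw [hjk, hg', mul_zero]

/-- evaluation-plus-top-coefficient linear map -/
def phiMap {F : Type*} [Field F] {n : ℕ} (a : Fin n → F) (t : ℕ) :
    F[X] →ₗ[F] (Fin (n + 1) → F) where
  toFun h := Fin.snoc (fun i => h.eval (a i)) (h.coeff t)
  map_add' h g := by
    funext i
    refine Fin.lastCases ?_ (fun i => ?_) i <;>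
      simp [Fin.snoc_last, Fin.snoc_castSucc]
  map_smul' c h := by
    funext i
    refine Fin.lastCases ?_ (fun i => ?_) i <;>
      simp [Fin.snoc_last, Fin.snoc_castSucc]

theorem stmt5 {F : Type*} [Field F] [Fintype F] (n k : ℕ)
    (hk3 : 3 ≤ k) (hk2n : 2 * k ≤ n) (hkn : k + 2 ≤ n) (hnq : n ≤ Fintype.card F)
    (a : Fin n → F) (ha : Function.Injective a) :
    (Submodule.span F
        (schurSet (codeSet a (1 : Fin n → F) k) (codeSet a (1 : Fin n → F) k)) :
      Set (Fin (n + 1) → F)) = codeSet a (1 : Fin n → F) (2 * k) := by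
  classical
  set φ := phiMap a (2 * k) with hφdef
  set W : Submodule F F[X] :=
    Polynomial.degreeLE F (2 * k) ⊓ LinearMap.ker (lcoeff F (2 * k - 1)) with hWdef
  have hmemW : ∀ h : F[X], h ∈ W ↔ h.natDegree ≤ 2 * k ∧ h.coeff (2 * k - 1) = 0 := by
    intro h
    simp [hWdef, Submodule.mem_inf, Polynomial.mem_degreeLE, LinearMap.mem_ker,
      lcoeff_apply, natDegree_le_iff_degree_le]
  -- the target code is the image of W under φ
  have hcode : codeSet a (1 : Fin n → F) (2 * k) = ↑(W.map φ) := by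
    ext w
    simp only [codeSet, Set.mem_setOf_eq, SetLike.mem_coe, Submodule.mem_map, hmemW,
      Pi.one_apply, one_mul]
    constructor
    · rintro ⟨f, h1, h2, rfl⟩
      exact ⟨f, ⟨h1, h2⟩, rfl⟩
    · rintro ⟨f, ⟨h1, h2⟩, rfl⟩
      exact ⟨f, h1, h2, rfl⟩
  -- set of products of admissible polynomials
  set P : Set F[X] := {p | ∃ f g : F[X],
    (f.natDegree ≤ k ∧ f.coeff (k - 1) = 0) ∧ (g.natDegree ≤ k ∧ g.coeff (k - 1) = 0) ∧
    p = f * g} with hPdef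
  have hPW : ∀ p ∈ P, p ∈ W := by
    rintro p ⟨f, g, ⟨hf1, hf2⟩, ⟨hg1, hg2⟩, rfl⟩
    rw [hmemW]
    exact ⟨le_trans (natDegree_mul_le) (by omega),
      coeff_mul_pred (by omega) hf1 hf2 hg1 hg2⟩
  have hφP : ∀ p ∈ P, φ p ∈ schurSet (codeSet a (1 : Fin n → F) k)
      (codeSet a (1 : Fin n → F) k) := by
    rintro p ⟨f, g, ⟨hf1, hf2⟩, ⟨hg1, hg2⟩, rfl⟩
    refine ⟨_, ⟨f, hf1, hf2, rfl⟩, _, ⟨g, hg1, hg2, rfl⟩, ?_⟩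
    funext i
    refine Fin.lastCases ?_ (fun i => ?_) i
    · simp [hφdef, phiMap, Fin.snoc_last, coeff_mul_two_mul hf1 hg1]
    · simp [hφdef, phiMap, Fin.snoc_castSucc]
  -- monomials X^m for admissible m lie in P
  have hmono : ∀ i : ℕ, i ≤ k - 2 ∨ i = k →
      ((X : F[X]) ^ i).natDegree ≤ k ∧ ((X : F[X]) ^ i).coeff (k - 1) = 0 := by
    intro i hi
    constructor
    · rw [natDegree_X_pow]; omega
    · rw [coeff_X_pow, if_neg (by omega)]
  have hXP : ∀ m : ℕ, m ≤ 2 * k → m ≠ 2 * k - 1 → ((X : F[X]) ^ m) ∈ P := by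
    intro m hm hm'
    have key : ∃ i j : ℕ, (i ≤ k - 2 ∨ i = k) ∧ (j ≤ k - 2 ∨ j = k) ∧ i + j = m := by
      rcases le_or_gt m (k - 2) with h1 | h1
      · exact ⟨m, 0, Or.inl h1, Or.inl (by omega), by omega⟩
      rcases le_or_gt m (2 * k - 4) with h2 | h2
      · exact ⟨k - 2, m - (k - 2), Or.inl le_rfl, Or.inl (by omega), by omega⟩
      by_cases h3 : m = 2 * k - 3
      · exact ⟨k, k - 3, Or.inr rfl, Or.inl (by omega), by omega⟩
      by_cases h4 : m = 2 * k - 2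
      · exact ⟨k, k - 2, Or.inr rfl, Or.inl le_rfl, by omega⟩
      · exact ⟨k, k, Or.inr rfl, Or.inr rfl, by omega⟩
    obtain ⟨i, j, hi, hj, hij⟩ := key
    exact ⟨X ^ i, X ^ j, hmono i hi, hmono j hj, by rw [← pow_add, hij]⟩
  -- W is contained in the span of P
  have hWspan : W ≤ Submodule.span F P := by
    intro h hh
    rw [hmemW] at hh
    have hrep := Polynomial.as_sum_range' h (2 * k + 1) (by omega)
    rw [hrep]
    refine Submodule.sum_mem _ ?_
    intro m hmem
    rw [Finset.mem_range] at hmem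
    by_cases hm : m = 2 * k - 1
    · rw [hm, hh.2, monomial_zero_right]
      exact Submodule.zero_mem _
    · rw [← C_mul_X_pow_eq_monomial, ← smul_eq_C_mul]
      exact Submodule.smul_mem _ _ (Submodule.subset_span (hXP m (by omega) hm))
  rw [hcode, SetLike.coe_set_eq]
  refine le_antisymm ?_ ?_
  · rw [Submodule.span_le]
    rintro w ⟨c, ⟨f, hf1, hf2, rfl⟩, d, ⟨g, hg1, hg2, rfl⟩, rfl⟩
    refine ⟨f * g, hPW _ ⟨f, g, ⟨hf1, hf2⟩, ⟨hg1, hg2⟩, rfl⟩, ?_⟩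
    funext i
    refine Fin.lastCases ?_ (fun i => ?_) i
    · simp [hφdef, phiMap, Fin.snoc_last, coeff_mul_two_mul hf1 hg1]
    · simp [hφdef, phiMap, Fin.snoc_castSucc]
  · intro w hw
    obtain ⟨h, hh, rfl⟩ := hw
    have : h ∈ Submodule.span F P := hWspan hh
    have h2 : φ h ∈ Submodule.map φ (Submodule.span F P) := ⟨h, this, rfl⟩
    rw [Submodule.map_span] at h2
    refine Submodule.span_mono ?_ h2
    rintro x ⟨p, hp, rfl⟩
    exact hφP p hp
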